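/- arXiv:1312.2970 — 2 statements merged into one kernel-verified Lean document; each statement's English description precedes it below -/
import Mathlib

section
/- The standard weight-1 representation of the Heisenberg-type group G is irreducible: on the vector space W with basis {e_z : z ∈ K₂}, the action (α,x,w)·e_z := α⟨x,z⟩ e_{z+w} defines an irreducible G-module on which k^× acts with weight 1. -/
abbrev ThetaK1 (p : ℕ) (d : Fin p → ℕ) : Type := ∀ i : Fin p, Multiplicative (ZMod (d i))

abbrev ThetaK2 (k : Type) [Field k] (p : ℕ) (d : Fin p → ℕ) : Type := ThetaK1 p d →* kˣ

def Heis (k : Type) [Field k] (p : ℕ) (d : Fin p → ℕ) : Type :=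
  kˣ × ThetaK1 p d × ThetaK2 k p d

namespace Heis

variable {k : Type} [Field k] {p : ℕ} {d : Fin p → ℕ}

def mk (α : kˣ) (x : ThetaK1 p d) (χ : ThetaK2 k p d) : Heis k p d := (α, x, χ)

instance : Mul (Heis k p d) :=
  ⟨fun a b => (a.1 * b.1 * b.2.2 a.2.1, a.2.1 * b.2.1, a.2.2 * b.2.2)⟩

instance : One (Heis k p d) := ⟨((1 : kˣ), 1, 1)⟩

instance : Inv (Heis k p d) := ⟨fun a => (a.1⁻¹ * a.2.2 a.2.1, a.2.1⁻¹, a.2.2⁻¹)⟩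

theorem mul_def (a b : Heis k p d) :
    a * b = (a.1 * b.1 * b.2.2 a.2.1, a.2.1 * b.2.1, a.2.2 * b.2.2) := rfl

theorem one_def : (1 : Heis k p d) = ((1 : kˣ), 1, 1) := rfl

theorem inv_def (a : Heis k p d) :
    a⁻¹ = (a.1⁻¹ * a.2.2 a.2.1, a.2.1⁻¹, a.2.2⁻¹) := rfl

theorem mul_assoc' (a b c : Heis k p d) : a * b * c = a * (b * c) := by
  obtain ⟨α, x, χ⟩ := a
  obtain ⟨β, y, ψ⟩ := b
  obtain ⟨γ, z, ω⟩ := c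
  refine Prod.ext ?_ (Prod.ext ?_ ?_)
  · show α * β * ψ x * γ * (ω (x * y)) = α * (β * γ * ω y) * ((ψ * ω) x)
    simp [map_mul, MonoidHom.mul_apply, mul_assoc, mul_comm, mul_left_comm]
  · exact mul_assoc x y z
  · exact mul_assoc χ ψ ω

theorem one_mul' (a : Heis k p d) : 1 * a = a := by
  obtain ⟨α, x, χ⟩ := a
  refine Prod.ext ?_ (Prod.ext ?_ ?_)
  · show 1 * α * χ 1 = α
    simp
  · exact one_mul x
  · exact one_mul χ

theorem mul_one' (a : Heis k p d) : a * 1 = a := by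
  obtain ⟨α, x, χ⟩ := a
  refine Prod.ext ?_ (Prod.ext ?_ ?_)
  · show α * 1 * (1 : ThetaK2 k p d) x = α
    simp
  · exact mul_one x
  · exact mul_one χ

theorem inv_mul_cancel' (a : Heis k p d) : a⁻¹ * a = 1 := by
  obtain ⟨α, x, χ⟩ := a
  refine Prod.ext ?_ (Prod.ext ?_ ?_)
  · show α⁻¹ * χ x * α * χ (x⁻¹) = 1
    simp [map_inv, mul_comm, mul_left_comm]
  · exact inv_mul_cancel x
  · exact inv_mul_cancel χ

instance : Group (Heis k p d) where
  mul_assoc := mul_assoc'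
  one_mul := one_mul'
  mul_one := mul_one'
  inv_mul_cancel := inv_mul_cancel'

/-- The multiplication rule of the Heisenberg-type group. -/
theorem mk_mul (α β : kˣ) (x y : ThetaK1 p d) (χ ψ : ThetaK2 k p d) :
    mk α x χ * mk β y ψ = mk (α * β * ψ x) (x * y) (χ * ψ) := rfl

end Heis

section Reps

variable {k : Type} [Field k]

/-- A subspace stable under a representation. -/
def RepStable {G V : Type} [Group G] [AddCommGroup V] [Module k V]
    (ρ : G →* (V →ₗ[k] V)ˣ) (W : Submodule k V) : Prop :=
  ∀ (g : G), ∀ w ∈ W, (ρ g : V →ₗ[k] V) w ∈ W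

/-- Irreducibility: nonzero and no nontrivial stable subspace. -/
def RepIrred {G V : Type} [Group G] [AddCommGroup V] [Module k V]
    (ρ : G →* (V →ₗ[k] V)ˣ) : Prop :=
  (∃ v : V, v ≠ 0) ∧
  ∀ W : Submodule k V, RepStable ρ W → W = ⊥ ∨ W = ⊤

/-- Isomorphism of representations of `G`. -/
def RepIso {G V W : Type} [Group G] [AddCommGroup V] [Module k V]
    [AddCommGroup W] [Module k W]
    (ρ : G →* (V →ₗ[k] V)ˣ) (τ : G →* (W →ₗ[k] W)ˣ) : Prop :=
  ∃ e : V ≃ₗ[k] W, ∀ (g : G) (v : V), e ((ρ g : V →ₗ[k] V) v) = (τ g : W →ₗ[k] W) (e v)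

variable {p : ℕ} {d : Fin p → ℕ}

/-- A representation of the Heisenberg-type group has weight `n` if `kˣ ⊆ G` acts through the
character `α ↦ αⁿ`. -/
def IsWeight (n : ℤ) {V : Type} [AddCommGroup V] [Module k V]
    (ρ : Heis k p d →* (V →ₗ[k] V)ˣ) : Prop :=
  ∀ (α : kˣ) (v : V), (ρ (Heis.mk α 1 1) : V →ₗ[k] V) v = ((α ^ n : kˣ) : k) • v

/-- `D n = (d₁⋯d_p)/(gcd(n,d₁)⋯gcd(n,d_p))`. -/
def ThetaD (p : ℕ) (d : Fin p → ℕ) (n : ℤ) : ℕ :=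
  (∏ i, d i) / ∏ i, Int.gcd n (d i)

end Reps

section Aux

variable {k : Type} [Field k] {p : ℕ} {d : Fin p → ℕ}

theorem thetaK2_mul_one_inv (z : ThetaK2 k p d) : z * (1 : ThetaK2 k p d)⁻¹ = z :=
  MonoidHom.ext fun a => by
    simp [MonoidHom.mul_apply, MonoidHom.inv_apply]

theorem thetaK2_mul_mul_inv (z χ ψ : ThetaK2 k p d) :
    z * (χ * ψ)⁻¹ = z * χ⁻¹ * ψ⁻¹ :=
  MonoidHom.ext fun a => by
    simp [MonoidHom.mul_apply, MonoidHom.inv_apply, mul_inv, mul_comm, mul_left_comm,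
      mul_assoc]

/-- The underlying endomorphism of the action of a group element. -/
def heisEnd (g : Heis k p d) :
    (ThetaK2 k p d → k) →ₗ[k] (ThetaK2 k p d → k) where
  toFun f := fun z => (g.1 : k) * (((z * g.2.2⁻¹) g.2.1 : kˣ) : k) * f (z * g.2.2⁻¹)
  map_add' f₁ f₂ := by funext z; simp [mul_add]
  map_smul' c f := by funext z; simp [smul_eq_mul]; ring

theorem heisEnd_apply (g : Heis k p d) (f : ThetaK2 k p d → k) (z : ThetaK2 k p d) :
    heisEnd g f z = (g.1 : k) * (((z * g.2.2⁻¹) g.2.1 : kˣ) : k) * f (z * g.2.2⁻¹) := rfl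

/-- The action as a monoid homomorphism into the endomorphism monoid. -/
def heisHom : Heis k p d →* ((ThetaK2 k p d → k) →ₗ[k] (ThetaK2 k p d → k)) where
  toFun := heisEnd
  map_one' := by
    refine LinearMap.ext fun f => funext fun z => ?_
    show ((1 : kˣ) : k) * (((z * (1 : ThetaK2 k p d)⁻¹) (1 : ThetaK1 p d) : kˣ) : k)
        * f (z * (1 : ThetaK2 k p d)⁻¹) = f z
    rw [thetaK2_mul_one_inv]
    simp
  map_mul' a b := by
    obtain ⟨α, x, χ⟩ := a
    obtain ⟨β, y, ψ⟩ := b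
    refine LinearMap.ext fun f => funext fun z => ?_
    show heisEnd _ f z = heisEnd _ (heisEnd _ f) z
    show _ = (α : k) * (((z * χ⁻¹) x : kˣ) : k) * ((β : k) * (((z * χ⁻¹ * ψ⁻¹) y : kˣ) : k) * f (z * χ⁻¹ * ψ⁻¹))
    show ((α * β * ψ x : kˣ) : k) * (((z * (χ * ψ)⁻¹) (x * y) : kˣ) : k)
          * f (z * (χ * ψ)⁻¹) = _
    rw [thetaK2_mul_mul_inv z χ ψ]
    have h1 : ((z * χ⁻¹ * ψ⁻¹) (x * y) : kˣ)
        = (z * χ⁻¹) x * (ψ x)⁻¹ * (z * χ⁻¹ * ψ⁻¹) y := by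
      simp [map_mul, MonoidHom.mul_apply, MonoidHom.inv_apply, mul_comm, mul_left_comm,
        mul_assoc]
    rw [h1]
    push_cast
    have hψ : ((ψ x : kˣ) : k) ≠ 0 := Units.ne_zero _
    field_simp

theorem heisHom_apply (g : Heis k p d) (f : ThetaK2 k p d → k) (z : ThetaK2 k p d) :
    heisHom g f z = (g.1 : k) * (((z * g.2.2⁻¹) g.2.1 : kˣ) : k) * f (z * g.2.2⁻¹) := rfl

end Aux

open Matrix

/-- The standard weight-1 representation of the Heisenberg-type group `G` is
irreducible: on the vector space `W` with basis `{e_z : z ∈ K₂}` (realized as functions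
`K₂ → k`), the action `(α,x,w)·e_z := α ⟨x,z⟩ e_{z·w}` (i.e., on functions,
`((α,x,w)·f)(z) = α · (z·w⁻¹)(x) · f(z·w⁻¹)`) defines an irreducible `G`-module on which `kˣ`
acts with weight 1. -/
theorem stmt10 {k : Type} [Field k] [IsAlgClosed k] {p : ℕ} {d : Fin p → ℕ}
    (hd0 : ∀ i, 0 < d i) (hchain : ∀ i j : Fin p, i ≤ j → d i ∣ d j)
    (hchar : ∀ i, ¬ (ringChar k ∣ d i)) :
    ∃ ρ : Heis k p d →* ((ThetaK2 k p d → k) →ₗ[k] (ThetaK2 k p d → k))ˣ,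
      (∀ (α : kˣ) (x : ThetaK1 p d) (w : ThetaK2 k p d)
        (f : ThetaK2 k p d → k) (z : ThetaK2 k p d),
        (ρ (Heis.mk α x w) : (ThetaK2 k p d → k) →ₗ[k] (ThetaK2 k p d → k)) f z =
          (α : k) * (((z * w⁻¹) x : kˣ) : k) * f (z * w⁻¹)) ∧
      IsWeight 1 ρ ∧ RepIrred ρ := by
  classical
  haveI : ∀ i, NeZero (d i) := fun i => ⟨(hd0 i).ne'⟩
  -- The representation
  refine ⟨(heisHom (k := k) (p := p) (d := d)).toHomUnits, ?_, ?_, ?_, ?_⟩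
  · intro α x w f z
    rw [MonoidHom.coe_toHomUnits]
    rfl
  · -- weight 1
    intro α v
    rw [MonoidHom.coe_toHomUnits]
    funext z
    rw [heisHom_apply]
    show (α : k) * (((z * (1 : ThetaK2 k p d)⁻¹) (1 : ThetaK1 p d) : kˣ) : k)
        * v (z * (1 : ThetaK2 k p d)⁻¹) = ((α ^ (1 : ℤ) : kˣ) : k) • v z
    rw [thetaK2_mul_one_inv]
    simp [smul_eq_mul]
  · -- nonzero vector
    exact ⟨(fun _ => (1 : k)), fun h => one_ne_zero (congrFun h 1)⟩
  · -- no nontrivial stable subspace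
    intro W hW
    by_cases hbot : W = ⊥
    · exact Or.inl hbot
    right
    -- finiteness of K₂
    haveI : Finite (ThetaK2 k p d) := by
      set N := Fintype.card (ThetaK1 p d) with hN
      haveI : NeZero N := ⟨Fintype.card_ne_zero⟩
      refine Finite.of_injective (fun z : ThetaK2 k p d =>
        (fun x : ThetaK1 p d => (⟨z x, (mem_rootsOfUnity N (z x)).2 (by
          rw [← map_pow, hN, pow_card_eq_one, _root_.map_one])⟩ : rootsOfUnity N k))) ?_
      intro z₁ z₂ h
      refine MonoidHom.ext fun x => ?_
      exact Subtype.ext_iff.1 (congrFun h x)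
    haveI : Fintype (ThetaK2 k p d) := Fintype.ofFinite _
    -- the evaluation matrix and surjectivity of c ↦ (z ↦ ∑ₓ z(x)·c(x))
    set M : Matrix (ThetaK2 k p d) (ThetaK1 p d) k := fun z x => ((z x : kˣ) : k) with hMdef
    have hMT : LinearMap.ker (Matrix.mulVecLin Mᵀ) = ⊥ := by
      rw [LinearMap.ker_eq_bot']
      intro c hc
      have li : LinearIndependent k
          (fun z : ThetaK2 k p d => ⇑((Units.coeHom k).comp z)) := by
        refine (linearIndependent_monoidHom (ThetaK1 p d) k).comp
          (fun z : ThetaK2 k p d => (Units.coeHom k).comp z) ?_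
        intro z₁ z₂ h
        exact MonoidHom.ext fun x => Units.ext (DFunLike.congr_fun h x)
      have h0 : ∑ z : ThetaK2 k p d,
          c z • (⇑((Units.coeHom k).comp z) : ThetaK1 p d → k) = 0 := by
        funext x
        have hx := congrFun hc x
        simp only [Matrix.mulVecLin_apply, Matrix.mulVec, dotProduct,
          Matrix.transpose_apply, hMdef, Pi.zero_apply] at hx
        rw [Finset.sum_apply]; refine Eq.trans ?_ hx
        exact Finset.sum_congr rfl fun _ _ => by simp only [Pi.smul_apply, smul_eq_mul]; exact mul_comm _ _
      funext z
      exact Fintype.linearIndependent_iff.mp li c h0 z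
    have hsurj : Function.Surjective (Matrix.mulVecLin M) := by
      rw [← LinearMap.range_eq_top]
      apply Submodule.eq_top_of_finrank_eq
      have h1 : Module.finrank k (LinearMap.range (Matrix.mulVecLin M)) = M.rank := rfl
      rw [h1, ← Matrix.rank_transpose, Matrix.rank,
        LinearMap.finrank_range_of_inj (LinearMap.ker_eq_bot.mp hMT),
        Module.finrank_fintype_fun_eq_card]
    -- W contains some f with f z₀ ≠ 0
    obtain ⟨f, hfW, hf⟩ := Submodule.ne_bot_iff W |>.1 hbot
    obtain ⟨z₀, hz₀⟩ : ∃ z₀, f z₀ ≠ 0 := by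
      by_contra h
      push_neg at h
      exact hf (funext h)
    -- W contains the delta function at z₀
    have hMx : ∀ x : ThetaK1 p d, (fun z => ((z x : kˣ) : k) * f z) ∈ W := by
      intro x
      have hmem := hW (Heis.mk 1 x 1) f hfW
      have heq : (((heisHom (k := k)).toHomUnits (Heis.mk 1 x 1) :
          (ThetaK2 k p d → k) →ₗ[k] (ThetaK2 k p d → k)) f)
          = fun z => ((z x : kˣ) : k) * f z := by
        funext z
        rw [MonoidHom.coe_toHomUnits, heisHom_apply]
        show ((1 : kˣ) : k) * (((z * (1 : ThetaK2 k p d)⁻¹) x : kˣ) : k)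
            * f (z * (1 : ThetaK2 k p d)⁻¹) = ((z x : kˣ) : k) * f z
        rw [thetaK2_mul_one_inv]
        simp
      rwa [heq] at hmem
    obtain ⟨c, hc⟩ := hsurj (Pi.single z₀ ((f z₀)⁻¹))
    have hcomb : (fun z => (M.mulVec c z) * f z) ∈ W := by
      have hrw : (fun z => (M.mulVec c z) * f z)
          = ∑ x : ThetaK1 p d, c x • (fun z => ((z x : kˣ) : k) * f z) := by
        funext z
        simp only [Matrix.mulVec, dotProduct, hMdef, Finset.sum_apply,
          Pi.smul_apply, smul_eq_mul, Finset.sum_mul]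
        exact Finset.sum_congr rfl fun x _ => by ring
      rw [hrw]
      exact Submodule.sum_mem W fun x _ => Submodule.smul_mem W _ (hMx x)
    have hδ : Pi.single z₀ (1 : k) ∈ W := by
      have heq : (fun z => (M.mulVec c z) * f z) = Pi.single z₀ (1 : k) := by
        funext z
        have : M.mulVec c z = (Pi.single z₀ ((f z₀)⁻¹) : ThetaK2 k p d → k) z := by
          rw [← hc]; rfl
        rw [this]
        by_cases h : z = z₀
        · subst h; simp [Pi.single_eq_same, inv_mul_cancel₀ hz₀]
        · simp [Pi.single_eq_of_ne h]
      rwa [heq] at hcomb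
    -- all delta functions are in W
    have hsingle : ∀ z₁ : ThetaK2 k p d, Pi.single z₁ (1 : k) ∈ W := by
      intro z₁
      have hmem := hW (Heis.mk 1 1 (z₀⁻¹ * z₁)) _ hδ
      have heq : (((heisHom (k := k)).toHomUnits (Heis.mk 1 1 (z₀⁻¹ * z₁)) :
          (ThetaK2 k p d → k) →ₗ[k] (ThetaK2 k p d → k)) (Pi.single z₀ (1 : k)))
          = Pi.single z₁ (1 : k) := by
        funext z
        rw [MonoidHom.coe_toHomUnits, heisHom_apply]
        show ((1 : kˣ) : k) * (((z * (z₀⁻¹ * z₁)⁻¹) (1 : ThetaK1 p d) : kˣ) : k)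
            * (Pi.single z₀ (1 : k) : ThetaK2 k p d → k) (z * (z₀⁻¹ * z₁)⁻¹)
            = (Pi.single z₁ (1 : k) : ThetaK2 k p d → k) z
        have hcl : z₀ * (z₀⁻¹ * z₁) = z₁ := mul_inv_cancel_left z₀ z₁
        have hcond : z * (z₀⁻¹ * z₁)⁻¹ = z₀ ↔ z = z₁ := by
          rw [mul_inv_eq_iff_eq_mul (a := z) (b := z₀⁻¹ * z₁) (c := z₀), hcl]
        by_cases h : z = z₁
        · subst h
          rw [Pi.single_apply, if_pos (hcond.2 rfl), Pi.single_eq_same]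
          simp
        · rw [Pi.single_apply, if_neg (fun hh => h (hcond.1 hh)),
            Pi.single_eq_of_ne h]
          simp
      rwa [heq] at hmem
    -- conclude W = ⊤
    rw [Submodule.eq_top_iff']
    intro f'
    have hrw : f' = ∑ z : ThetaK2 k p d,
        f' z • (Pi.single z (1 : k) : ThetaK2 k p d → k) := by
      funext z'
      simp [Finset.sum_apply, Pi.single_apply, mul_ite, Finset.sum_ite_eq]
    rw [hrw]
    exact Submodule.sum_mem W fun z _ => Submodule.smul_mem W _ (hsingle z)
end

section
/- Let π_n : K₂ → K₂ be multiplication by n. For y ∈ K₂, χ ∈ Hom(ker π_n, k^×), and a set-theoretic section σ of K₂ → image π_n, the formulas (α,x,w)·e_{y+z,χ} := αⁿ ⟨x, y+z⟩ χ(w + σ(z) − σ(nw+z)) e_{y+z+nw,χ}, for z ∈ image π_n, define a group action of G on W_{y,χ} = span{e_{y+z,χ} : z ∈ image π_n}, making it an irreducible weight-n G-module. -/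
section Wn

variable {k : Type} [Field k] {p : ℕ} {d : Fin p → ℕ}

/-- `π_n : K₂ → K₂`, `y ↦ yⁿ`. -/
def piN (n : ℤ) : ThetaK2 k p d →* ThetaK2 k p d where
  toFun y := y ^ n
  map_one' := by
    show (1 : ThetaK2 k p d) ^ n = 1
    exact one_zpow (α := ThetaK2 k p d) n
  map_mul' a b := by
    show (a * b) ^ n = a ^ n * b ^ n
    exact mul_zpow a b n

open scoped Classical in
/-- The standard basis vector `e_{y·z}` (indexed by `z ∈ image π_n`) of the space of functions
on `image π_n`. -/
noncomputable def eVec (n : ℤ) (z : (piN (k := k) (p := p) (d := d) n).range) :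
    ((piN (k := k) (p := p) (d := d) n).range → k) :=
  fun z' => if z' = z then 1 else 0

/-- The element `π_n w` of the image of `π_n`. -/
def rngElt (n : ℤ) (w : ThetaK2 k p d) : (piN (k := k) (p := p) (d := d) n).range :=
  ⟨piN n w, ⟨w, rfl⟩⟩

/-- The element `w · σ(z) · σ(z · π_n w)⁻¹` of `ker π_n`. -/
def kerElt (n : ℤ) (σ : (piN (k := k) (p := p) (d := d) n).range → ThetaK2 k p d)
    (hσ : ∀ z, piN n (σ z) = (z : ThetaK2 k p d))
    (w : ThetaK2 k p d) (z : (piN (k := k) (p := p) (d := d) n).range) :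
    (piN (k := k) (p := p) (d := d) n).ker :=
  ⟨w * σ z * (σ (z * rngElt n w))⁻¹, by
    have hinv : piN n ((σ (z * rngElt n w))⁻¹)
        = ((((z * rngElt n w) : (piN (k := k) (p := p) (d := d) n).range) :
            ThetaK2 k p d))⁻¹ := by
      have h := map_inv (piN (k := k) (p := p) (d := d) n) (σ (z * rngElt n w))
      rw [hσ (z * rngElt n w)] at h
      exact h
    rw [MonoidHom.mem_ker, map_mul, map_mul, hσ z, hinv]
    have hcoe : (((z * rngElt n w) : (piN (k := k) (p := p) (d := d) n).range) :
        ThetaK2 k p d) = (z : ThetaK2 k p d) * piN n w := by simp [rngElt]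
    rw [hcoe]
    exact mul_inv_eq_one.mpr (mul_comm (piN (k := k) (p := p) (d := d) n w) (z : ThetaK2 k p d))⟩

end Wn

section Aux11

variable {k : Type} [Field k] {p : ℕ} {d : Fin p → ℕ}

lemma aux_comm_group {G : Type*} [CommGroup G] (w w' s t u : G) :
    (w * t * u⁻¹) * (w' * s * t⁻¹) = w * w' * s * u⁻¹ := by
  have h : (w * t * u⁻¹) * (w' * s * t⁻¹) = w * w' * s * u⁻¹ * (t * t⁻¹) := by ac_rfl
  rw [h, mul_inv_cancel, mul_one]

lemma aux_mhom_zpow_apply {M N : Type*} [MulOneClass M] [CommGroup N]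
    (f : M →* N) (n : ℤ) (x : M) : (f ^ n) x = f x ^ n := by
  cases n with
  | ofNat m =>
    rw [Int.ofNat_eq_coe, zpow_natCast, zpow_natCast, MonoidHom.pow_apply]
  | negSucc m =>
    rw [zpow_negSucc, zpow_negSucc]
    rfl

lemma piN_apply (n : ℤ) (w : ThetaK2 k p d) : piN n w = w ^ n := rfl

lemma rngElt_coe (n : ℤ) (w : ThetaK2 k p d) :
    ((rngElt n w : (piN (k := k) (p := p) (d := d) n).range) : ThetaK2 k p d) = w ^ n := rfl

lemma rngElt_one (n : ℤ) : rngElt (k := k) (p := p) (d := d) n 1 = 1 := by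
  apply Subtype.ext
  exact one_zpow (α := ThetaK2 k p d) n

lemma rngElt_mul (n : ℤ) (w w' : ThetaK2 k p d) :
    rngElt n (w * w') = rngElt n w * rngElt n w' := by
  apply Subtype.ext
  exact mul_zpow w w' n

lemma rngElt_sigma (n : ℤ)
    (σ : ↥(piN (k := k) (p := p) (d := d) n).range → ThetaK2 k p d)
    (hσ : ∀ z, piN n (σ z) = (z : ThetaK2 k p d))
    (u : ↥(piN (k := k) (p := p) (d := d) n).range) :
    rngElt n (σ u) = u := by
  apply Subtype.ext
  exact hσ u

lemma kerElt_one (n : ℤ)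
    (σ : ↥(piN (k := k) (p := p) (d := d) n).range → ThetaK2 k p d)
    (hσ : ∀ z, piN n (σ z) = (z : ThetaK2 k p d))
    (z : ↥(piN (k := k) (p := p) (d := d) n).range) :
    kerElt n σ hσ 1 z = 1 := by
  apply Subtype.ext
  show (1 : ThetaK2 k p d) * σ z * (σ (z * rngElt n 1))⁻¹ = 1
  rw [rngElt_one, mul_one]
  exact mul_inv_eq_one.mpr (one_mul (σ z))

lemma kerElt_mul (n : ℤ)
    (σ : ↥(piN (k := k) (p := p) (d := d) n).range → ThetaK2 k p d)
    (hσ : ∀ z, piN n (σ z) = (z : ThetaK2 k p d))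
    (w w' : ThetaK2 k p d) (z : ↥(piN (k := k) (p := p) (d := d) n).range) :
    kerElt n σ hσ (w * w') z
      = kerElt n σ hσ w (z * rngElt n w') * kerElt n σ hσ w' z := by
  apply Subtype.ext
  show (w * w') * σ z * (σ (z * rngElt n (w * w')))⁻¹
      = (w * σ (z * rngElt n w') * (σ (z * rngElt n w' * rngElt n w))⁻¹)
        * (w' * σ z * (σ (z * rngElt n w'))⁻¹)
  have harg : z * rngElt n w' * rngElt n w = z * rngElt n (w * w') := by
    rw [rngElt_mul, mul_assoc, mul_comm (rngElt n w') (rngElt n w)]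
  rw [harg]
  exact (aux_comm_group w w' (σ z) (σ (z * rngElt n w')) (σ (z * rngElt n (w * w')))).symm

variable (n : ℤ) (y : ThetaK2 k p d)
  (χ : ↥(piN (k := k) (p := p) (d := d) n).ker →* kˣ)
  (σ : ↥(piN (k := k) (p := p) (d := d) n).range → ThetaK2 k p d)
  (hσ : ∀ z, piN n (σ z) = (z : ThetaK2 k p d))

/-- The scalar factor of the action. -/
noncomputable def cU (g : Heis k p d) (z : ↥(piN (k := k) (p := p) (d := d) n).range) : kˣ :=
  g.1 ^ n * (y * (z : ThetaK2 k p d)) g.2.1 * χ (kerElt n σ hσ g.2.2 z)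

lemma cU_one (z : ↥(piN (k := k) (p := p) (d := d) n).range) :
    cU n y χ σ hσ 1 z = 1 := by
  show (1 : kˣ) ^ n * (y * (z : ThetaK2 k p d)) 1 * χ (kerElt n σ hσ 1 z) = 1
  rw [kerElt_one, map_one, map_one, one_zpow, mul_one, mul_one]

lemma cU_mul (g h : Heis k p d) (z : ↥(piN (k := k) (p := p) (d := d) n).range) :
    cU n y χ σ hσ (g * h) z
      = cU n y χ σ hσ g (z * rngElt n h.2.2) * cU n y χ σ hσ h z := by
  obtain ⟨α, x, w⟩ := g
  obtain ⟨β, x', w'⟩ := h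
  show (α * β * w' x) ^ n * (y * (z : ThetaK2 k p d)) (x * x')
        * χ (kerElt n σ hσ (w * w') z)
      = (α ^ n * (y * ((z * rngElt n w' : ↥(piN (k := k) (p := p) (d := d) n).range)
            : ThetaK2 k p d)) x * χ (kerElt n σ hσ w (z * rngElt n w')))
        * (β ^ n * (y * (z : ThetaK2 k p d)) x' * χ (kerElt n σ hσ w' z))
  rw [kerElt_mul, map_mul]
  have hcoe : ((z * rngElt n w' : ↥(piN (k := k) (p := p) (d := d) n).range)
      : ThetaK2 k p d) = (z : ThetaK2 k p d) * w' ^ n := rfl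
  rw [hcoe]
  rw [Units.ext_iff]
  push_cast [mul_zpow, MonoidHom.mul_apply, map_mul, aux_mhom_zpow_apply]
  ring

/-- The linear action map. -/
noncomputable def Tlin (g : Heis k p d) :
    (↥(piN (k := k) (p := p) (d := d) n).range → k) →ₗ[k]
      (↥(piN (k := k) (p := p) (d := d) n).range → k) where
  toFun f := fun z' => (cU n y χ σ hσ g (z' * (rngElt n g.2.2)⁻¹) : k)
      * f (z' * (rngElt n g.2.2)⁻¹)
  map_add' f₁ f₂ := by funext z'; simp [mul_add]
  map_smul' c f := by funext z'; simp [smul_eq_mul]; ring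

lemma Tlin_apply (g : Heis k p d) (f : ↥(piN (k := k) (p := p) (d := d) n).range → k)
    (z' : ↥(piN (k := k) (p := p) (d := d) n).range) :
    Tlin n y χ σ hσ g f z' = (cU n y χ σ hσ g (z' * (rngElt n g.2.2)⁻¹) : k)
      * f (z' * (rngElt n g.2.2)⁻¹) := rfl

lemma Tlin_one : Tlin n y χ σ hσ 1 = LinearMap.id := by
  apply LinearMap.ext
  intro f
  funext z'
  have h22 : (1 : Heis k p d).2.2 = 1 := rfl
  rw [Tlin_apply, h22, rngElt_one, inv_one, mul_one, cU_one, Units.val_one, one_mul]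
  rfl

lemma Tlin_mul (g h : Heis k p d) :
    Tlin n y χ σ hσ (g * h) = (Tlin n y χ σ hσ g).comp (Tlin n y χ σ hσ h) := by
  apply LinearMap.ext
  intro f
  funext z'
  have h22 : (g * h).2.2 = g.2.2 * h.2.2 := rfl
  rw [LinearMap.comp_apply, Tlin_apply, Tlin_apply, Tlin_apply, h22, rngElt_mul]
  set u := z' * (rngElt n g.2.2 * rngElt n h.2.2)⁻¹ with hu
  have h2 : z' * (rngElt n g.2.2)⁻¹ * (rngElt n h.2.2)⁻¹ = u := by
    rw [hu, mul_inv_rev, mul_assoc, mul_comm ((rngElt n g.2.2)⁻¹)]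
  have h1 : z' * (rngElt n g.2.2)⁻¹ = u * rngElt n h.2.2 := by
    rw [← h2, mul_assoc, inv_mul_cancel, mul_one]
  rw [h2, h1, cU_mul]
  have h3 : u * rngElt n ((g * h).2.2) = u * rngElt n g.2.2 * rngElt n h.2.2 := by
    rw [h22, rngElt_mul]
    exact (mul_assoc u (rngElt n g.2.2) (rngElt n h.2.2)).symm
  push_cast
  ring

/-- The representation. -/
noncomputable def rhoRep : Heis k p d →*
    ((↥(piN (k := k) (p := p) (d := d) n).range → k) →ₗ[k]
      (↥(piN (k := k) (p := p) (d := d) n).range → k))ˣ :=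
  MonoidHom.mk'
    (fun g => ⟨Tlin n y χ σ hσ g, Tlin n y χ σ hσ g⁻¹,
      by rw [Module.End.mul_eq_comp, ← Tlin_mul, mul_inv_cancel, Tlin_one]; rfl,
      by rw [Module.End.mul_eq_comp, ← Tlin_mul, inv_mul_cancel, Tlin_one]; rfl⟩)
    (fun g h => by
      apply Units.ext
      show Tlin n y χ σ hσ (g * h) = Tlin n y χ σ hσ g * Tlin n y χ σ hσ h
      rw [Module.End.mul_eq_comp, Tlin_mul])

lemma rhoRep_apply (g : Heis k p d) :
    ((rhoRep n y χ σ hσ g :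
      (↥(piN (k := k) (p := p) (d := d) n).range → k) →ₗ[k]
        (↥(piN (k := k) (p := p) (d := d) n).range → k))) = Tlin n y χ σ hσ g := rfl

open scoped Classical in
lemma Tlin_eVec (g : Heis k p d) (z : ↥(piN (k := k) (p := p) (d := d) n).range) :
    Tlin n y χ σ hσ g (eVec n z)
      = ((cU n y χ σ hσ g z : kˣ) : k) • eVec n (z * rngElt n g.2.2) := by
  funext z'
  rw [Tlin_apply]
  by_cases hc : z' = z * rngElt n g.2.2
  · have h1 : z' * (rngElt n g.2.2)⁻¹ = z := by rw [hc, mul_inv_cancel_right]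
    rw [h1]
    simp [eVec, hc]
  · have h1 : z' * (rngElt n g.2.2)⁻¹ ≠ z := by
      intro h
      apply hc
      rw [← h, inv_mul_cancel_right]
    simp [eVec, h1, hc]

end Aux11

section Fin11

variable {k : Type} [Field k] {p : ℕ} {d : Fin p → ℕ}

lemma thetaK2_finite (hd0 : ∀ i, 0 < d i) : Finite (ThetaK2 k p d) := by
  haveI : ∀ i, NeZero (d i) := fun i => ⟨(hd0 i).ne'⟩
  haveI : Fintype (ThetaK1 p d) := by
    unfold ThetaK1
    infer_instance
  set M : ℕ+ := ⟨Fintype.card (ThetaK1 p d), Fintype.card_pos⟩ with hM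
  haveI : Fintype (rootsOfUnity M k) := Fintype.ofFinite _
  set Φ : ThetaK2 k p d → (ThetaK1 p d → rootsOfUnity M k) :=
    fun φ x => ⟨φ x, by
      rw [mem_rootsOfUnity]
      rw [← map_pow]
      have : x ^ (M : ℕ) = 1 := pow_card_eq_one
      rw [this, map_one]⟩ with hΦ
  have hinj : Function.Injective Φ := by
    intro φ ψ h
    apply MonoidHom.ext
    intro x
    have := congrFun h x
    exact Subtype.ext_iff.mp this
  exact Finite.of_injective Φ hinj

/-- Sum of a nontrivial character over a finite group vanishes. -/
lemma char_sum_zero {G : Type*} [CommGroup G] [Fintype G] (ψ : G →* kˣ) (hψ : ψ ≠ 1) :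
    ∑ x : G, ((ψ x : kˣ) : k) = 0 := by
  obtain ⟨x₀, hx₀⟩ : ∃ x₀, ψ x₀ ≠ 1 := by
    by_contra h
    push_neg at h
    exact hψ (MonoidHom.ext fun x => h x)
  have key : ((ψ x₀ : kˣ) : k) * ∑ x : G, ((ψ x : kˣ) : k) = ∑ x : G, ((ψ x : kˣ) : k) := by
    rw [Finset.mul_sum]
    apply Fintype.sum_bijective (fun x => x₀ * x) (Group.mulLeft_bijective x₀)
    intro x
    rw [map_mul]
    push_cast
    ring
  have h2 : (((ψ x₀ : kˣ) : k) - 1) * ∑ x : G, ((ψ x : kˣ) : k) = 0 := by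
    rw [sub_mul, key, one_mul, sub_self]
  rcases mul_eq_zero.mp h2 with h | h
  · exfalso
    apply hx₀
    apply Units.ext
    have : ((ψ x₀ : kˣ) : k) = 1 := by linear_combination h
    simpa using this
  · exact h

lemma card_thetaK1 (hd0 : ∀ i, 0 < d i) :
    haveI : ∀ i, NeZero (d i) := fun i => ⟨(hd0 i).ne'⟩
    Fintype.card (ThetaK1 p d) = ∏ i, d i := by
  haveI : ∀ i, NeZero (d i) := fun i => ⟨(hd0 i).ne'⟩
  rw [Fintype.card_pi]
  congr 1
  funext i
  rw [Fintype.card_congr Multiplicative.toAdd, ZMod.card]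

lemma card_thetaK1_ne_zero (hd0 : ∀ i, 0 < d i) (hchar : ∀ i, ¬ (ringChar k ∣ d i)) :
    haveI : ∀ i, NeZero (d i) := fun i => ⟨(hd0 i).ne'⟩
    ((Fintype.card (ThetaK1 p d) : k) ≠ 0) := by
  haveI : ∀ i, NeZero (d i) := fun i => ⟨(hd0 i).ne'⟩
  rw [card_thetaK1 hd0]
  intro h
  have hdvd : ringChar k ∣ ∏ i, d i := ringChar.dvd h
  rcases CharP.char_is_prime_or_zero k (ringChar k) with hp | hp
  · obtain ⟨i, _, hi⟩ := (Prime.dvd_finset_prod_iff hp.prime d).mp hdvd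
    exact hchar i hi
  · rw [hp] at hdvd
    rw [zero_dvd_iff] at hdvd
    obtain ⟨i, _, hi⟩ := Finset.prod_eq_zero_iff.mp hdvd
    exact (hd0 i).ne' hi

end Fin11

section Aux12

variable {k : Type} [Field k] {p : ℕ} {d : Fin p → ℕ}

lemma aux_comm_group2 {G : Type*} [CommGroup G] (a b c : G) :
    (a * b)⁻¹ * (a * c) = c * b⁻¹ := by
  have h : (a * b)⁻¹ * (a * c) = c * b⁻¹ * (a⁻¹ * a) := by
    rw [mul_inv_rev]; ac_rfl
  rw [h, inv_mul_cancel, mul_one]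

lemma cU_mk (n : ℤ) (y : ThetaK2 k p d)
    (χ : ↥(piN (k := k) (p := p) (d := d) n).ker →* kˣ)
    (σ : ↥(piN (k := k) (p := p) (d := d) n).range → ThetaK2 k p d)
    (hσ : ∀ z, piN n (σ z) = (z : ThetaK2 k p d))
    (α : kˣ) (x : ThetaK1 p d) (w : ThetaK2 k p d)
    (z : ↥(piN (k := k) (p := p) (d := d) n).range) :
    cU n y χ σ hσ (Heis.mk α x w) z
      = α ^ n * (y * (z : ThetaK2 k p d)) x * χ (kerElt n σ hσ w z) := rfl

lemma Tlin_mk_one (n : ℤ) (y : ThetaK2 k p d)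
    (χ : ↥(piN (k := k) (p := p) (d := d) n).ker →* kˣ)
    (σ : ↥(piN (k := k) (p := p) (d := d) n).range → ThetaK2 k p d)
    (hσ : ∀ z, piN n (σ z) = (z : ThetaK2 k p d))
    (x : ThetaK1 p d) (f : ↥(piN (k := k) (p := p) (d := d) n).range → k)
    (z' : ↥(piN (k := k) (p := p) (d := d) n).range) :
    Tlin n y χ σ hσ (Heis.mk 1 x 1) f z'
      = (((y * (z' : ThetaK2 k p d)) x : kˣ) : k) * f z' := by
  rw [Tlin_apply]
  have h22 : (Heis.mk (1 : kˣ) x (1 : ThetaK2 k p d)).2.2 = 1 := rfl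
  rw [h22, rngElt_one, inv_one, mul_one]
  congr 1
  have hc : cU n y χ σ hσ (Heis.mk 1 x 1) z' = (y * (z' : ThetaK2 k p d)) x := by
    rw [cU_mk, kerElt_one, map_one, mul_one, one_zpow, one_mul]
  rw [hc]

end Aux12

/-- Let `π_n : K₂ → K₂` be multiplication by `n` (written multiplicatively:
`y ↦ yⁿ`).  For `y ∈ K₂`, a character `χ` of `ker π_n`, and a normalized set-theoretic section
`σ` of `K₂ ↠ image π_n`, the formulas
`(α,x,w)·e_{y·z,χ} := αⁿ ⟨x, y·z⟩ χ(w·σ(z)·σ(z·(π_n w))⁻¹) e_{y·z·(π_n w),χ}` (`z ∈ image π_n`)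
define an action of the Heisenberg-type group `G` on
`W_{y,χ} = span{e_{y·z,χ} : z ∈ image π_n}`, making it an irreducible weight-`n` `G`-module. -/
theorem stmt11 {k : Type} [Field k] [IsAlgClosed k] {p : ℕ} {d : Fin p → ℕ}
    (hd0 : ∀ i, 0 < d i) (hchain : ∀ i j : Fin p, i ≤ j → d i ∣ d j)
    (hchar : ∀ i, ¬ (ringChar k ∣ d i))
    (n : ℤ) (y : ThetaK2 k p d)
    (χ : ↥(piN (k := k) (p := p) (d := d) n).ker →* kˣ)
    (σ : ↥(piN (k := k) (p := p) (d := d) n).range → ThetaK2 k p d)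
    (hσ : ∀ z, piN n (σ z) = (z : ThetaK2 k p d)) (hσ1 : σ 1 = 1) :
    ∃ ρ : Heis k p d →*
        ((↥(piN (k := k) (p := p) (d := d) n).range → k) →ₗ[k]
          (↥(piN (k := k) (p := p) (d := d) n).range → k))ˣ,
      (∀ (α : kˣ) (x : ThetaK1 p d) (w : ThetaK2 k p d)
          (z : ↥(piN (k := k) (p := p) (d := d) n).range),
        (ρ (Heis.mk α x w) :
            (↥(piN (k := k) (p := p) (d := d) n).range → k) →ₗ[k]
              (↥(piN (k := k) (p := p) (d := d) n).range → k)) (eVec n z) =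
          ((α ^ n * (y * (z : ThetaK2 k p d)) x * χ (kerElt n σ hσ w z) : kˣ) : k) •
            eVec n (z * rngElt n w)) ∧
      IsWeight n ρ ∧ RepIrred ρ := by
  classical
  haveI : ∀ i, NeZero (d i) := fun i => ⟨(hd0 i).ne'⟩
  haveI hfin2 : Finite (ThetaK2 k p d) := thetaK2_finite hd0
  haveI hfinR : Finite (↥(piN (k := k) (p := p) (d := d) n).range) := Subtype.finite
  haveI : Fintype (↥(piN (k := k) (p := p) (d := d) n).range) := Fintype.ofFinite _
  refine ⟨rhoRep n y χ σ hσ, ?_, ?_, ?_, ?_⟩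
  · -- the action formula
    intro α x w z
    rw [rhoRep_apply, Tlin_eVec, cU_mk]
    rfl
  · -- weight n
    intro α v
    rw [rhoRep_apply]
    funext z'
    rw [Tlin_apply]
    have h22 : (Heis.mk α (1 : ThetaK1 p d) (1 : ThetaK2 k p d)).2.2 = 1 := rfl
    rw [h22, rngElt_one, inv_one, mul_one]
    have hc : cU n y χ σ hσ (Heis.mk α 1 1) z' = α ^ n := by
      rw [cU_mk, kerElt_one, map_one, map_one, mul_one, mul_one]
    rw [hc]
    rfl
  · -- nonzero
    refine ⟨eVec n 1, fun h0 => ?_⟩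
    have h1 := congrFun h0 1
    simp [eVec] at h1
  · -- no nontrivial stable subspaces
    intro W hW
    rw [or_iff_not_imp_left]
    intro hWbot
    obtain ⟨f, hfW, hf0⟩ := (Submodule.ne_bot_iff W).mp hWbot
    obtain ⟨z₀, hz₀⟩ : ∃ z₀, f z₀ ≠ 0 := by
      by_contra h
      push_neg at h
      exact hf0 (funext h)
    have hspan : ∀ f' : (↥(piN (k := k) (p := p) (d := d) n).range → k),
        f' = ∑ z : ↥(piN (k := k) (p := p) (d := d) n).range, f' z • eVec n z := by
      intro f'
      funext z'
      rw [Finset.sum_apply, Finset.sum_eq_single z']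
      · simp [eVec]
      · intro b _ hb
        have : z' ≠ b := Ne.symm hb
        simp [eVec, this]
      · intro h
        exact absurd (Finset.mem_univ z') h
    -- the averaged projection onto the z₀ coordinate
    have hPmem : (∑ x : ThetaK1 p d,
        ((((y * ((z₀ : ↥(piN (k := k) (p := p) (d := d) n).range) : ThetaK2 k p d)) x)⁻¹ : kˣ) : k)
          • (Tlin n y χ σ hσ (Heis.mk 1 x 1) f)) ∈ W := by
      apply Submodule.sum_mem
      intro x _
      exact Submodule.smul_mem _ _ (hW (Heis.mk 1 x 1) f hfW)
    have hPval : (∑ x : ThetaK1 p d,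
        ((((y * ((z₀ : ↥(piN (k := k) (p := p) (d := d) n).range) : ThetaK2 k p d)) x)⁻¹ : kˣ) : k)
          • (Tlin n y χ σ hσ (Heis.mk 1 x 1) f))
        = ((Fintype.card (ThetaK1 p d) : k) * f z₀) • eVec n z₀ := by
      funext z'
      rw [Finset.sum_apply]
      by_cases hzz : z' = z₀
      · have hterm : ∀ x ∈ (Finset.univ : Finset (ThetaK1 p d)),
            (((((y * ((z₀ : ↥(piN (k := k) (p := p) (d := d) n).range) : ThetaK2 k p d)) x)⁻¹
              : kˣ) : k) • (Tlin n y χ σ hσ (Heis.mk 1 x 1) f)) z' = f z₀ := by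
          intro x _
          rw [Pi.smul_apply, Tlin_mk_one, hzz, smul_eq_mul, ← mul_assoc,
            ← Units.val_mul, inv_mul_cancel, Units.val_one, one_mul]
        rw [Finset.sum_congr rfl hterm, Finset.sum_const, Finset.card_univ, nsmul_eq_mul,
          Pi.smul_apply, hzz, smul_eq_mul]
        have he : eVec n z₀ z₀ = 1 := by simp [eVec]
        rw [he, mul_one]
      · set ψ : ThetaK2 k p d :=
          ((z' : ↥(piN (k := k) (p := p) (d := d) n).range) : ThetaK2 k p d)
            * (((z₀ : ↥(piN (k := k) (p := p) (d := d) n).range) : ThetaK2 k p d))⁻¹ with hψ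
        have hψ1 : ψ ≠ 1 := by
          intro h1
          apply hzz
          apply Subtype.ext
          rw [hψ] at h1
          exact mul_inv_eq_one.mp h1
        have hterm : ∀ x ∈ (Finset.univ : Finset (ThetaK1 p d)),
            (((((y * ((z₀ : ↥(piN (k := k) (p := p) (d := d) n).range) : ThetaK2 k p d)) x)⁻¹
              : kˣ) : k) • (Tlin n y χ σ hσ (Heis.mk 1 x 1) f)) z'
              = ((ψ x : kˣ) : k) * f z' := by
          intro x _
          rw [Pi.smul_apply, Tlin_mk_one, smul_eq_mul, ← mul_assoc, ← Units.val_mul]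
          congr 2
          show ((y * ((z₀ : ↥(piN (k := k) (p := p) (d := d) n).range) : ThetaK2 k p d)) x)⁻¹
            * ((y * ((z' : ↥(piN (k := k) (p := p) (d := d) n).range) : ThetaK2 k p d)) x) = ψ x
          have h1 : ((y * ((z₀ : ↥(piN (k := k) (p := p) (d := d) n).range) : ThetaK2 k p d)) x)⁻¹
              * ((y * ((z' : ↥(piN (k := k) (p := p) (d := d) n).range) : ThetaK2 k p d)) x)
              = (((z' : ↥(piN (k := k) (p := p) (d := d) n).range) : ThetaK2 k p d)) x
                * ((((z₀ : ↥(piN (k := k) (p := p) (d := d) n).range) : ThetaK2 k p d)) x)⁻¹ :=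
            aux_comm_group2 _ _ _
          rw [h1]
          rfl
        rw [Finset.sum_congr rfl hterm, ← Finset.sum_mul, char_sum_zero ψ hψ1, zero_mul]
        have he : eVec n z₀ z' = 0 := by simp [eVec, hzz]
        rw [Pi.smul_apply, he, smul_eq_mul, mul_zero]
    have hcne : ((Fintype.card (ThetaK1 p d) : k) * f z₀) ≠ 0 :=
      mul_ne_zero (card_thetaK1_ne_zero hd0 hchar) hz₀
    have heW : eVec n z₀ ∈ W := by
      rw [hPval] at hPmem
      have h2 : eVec n z₀ = ((Fintype.card (ThetaK1 p d) : k) * f z₀)⁻¹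
          • (((Fintype.card (ThetaK1 p d) : k) * f z₀) • eVec n z₀) := by
        rw [smul_smul, inv_mul_cancel₀ hcne, one_smul]
      rw [h2]
      exact Submodule.smul_mem _ _ hPmem
    have hall : ∀ z, eVec n z ∈ W := by
      intro z
      have hg := hW (Heis.mk 1 1 (σ (z * z₀⁻¹))) _ heW
      rw [rhoRep_apply, Tlin_eVec] at hg
      have h22 : (Heis.mk (1 : kˣ) (1 : ThetaK1 p d) (σ (z * z₀⁻¹))).2.2 = σ (z * z₀⁻¹) := rfl
      rw [h22, rngElt_sigma n σ hσ] at hg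
      have hidx : z₀ * (z * z₀⁻¹) = z := by
        rw [mul_comm z z₀⁻¹, mul_inv_cancel_left]
      rw [hidx] at hg
      set a : kˣ := cU n y χ σ hσ (Heis.mk 1 1 (σ (z * z₀⁻¹))) z₀ with ha
      have h2 : eVec n z = ((a : k))⁻¹ • ((a : k) • eVec n z) := by
        rw [smul_smul, inv_mul_cancel₀ (Units.ne_zero a), one_smul]
      rw [h2]
      exact Submodule.smul_mem _ _ hg
    apply eq_top_iff.mpr
    intro f' _
    rw [hspan f']
    exact Submodule.sum_mem _ fun z _ => Submodule.smul_mem _ _ (hall z)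
end
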